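/- Let k ≥ 2 and let {t_n} be the 2k-nacci sequence. Then ν_2(t_n) = 1 whenever n ≡ 2k+1 (mod 2(2k+1)). -/

import Mathlib

theorem twoknacci_val_one (k : ℕ) (hk : 2 ≤ k) (t : ℕ → ℕ)
    (h0 : t 0 = 0)
    (h1 : ∀ n, 1 ≤ n → n ≤ 2 * k - 1 → t n = 1)
    (hrec : ∀ n, 2 * k ≤ n → t n = ∑ i ∈ Finset.Icc 1 (2 * k), t (n - i)) :
    ∀ n : ℕ, n % (2 * (2 * k + 1)) = 2 * k + 1 → padicValNat 2 (t n) = 1 := by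
  set q := 2 * k + 1 with hq
  -- telescoping lemma
  have tele : ∀ n, q ≤ n → t n + t (n - q) = 2 * t (n - 1) := by
    intro n hn
    have h2k : 2 * k ≤ n := by omega
    have h2k' : 2 * k ≤ n - 1 := by omega
    have e1 : t n = ∑ i ∈ Finset.Icc 1 (2 * k), t (n - i) := hrec n h2k
    have e2 : t (n - 1) = ∑ i ∈ Finset.Icc 2 (2 * k + 1), t (n - i) := by
      rw [hrec (n - 1) h2k']
      have : Finset.Icc 2 (2 * k + 1) = (Finset.Icc 1 (2 * k)).map (addRightEmbedding 1) := by
        rw [Finset.map_add_right_Icc]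
      rw [this, Finset.sum_map]
      apply Finset.sum_congr rfl
      intro i hi
      simp only [addRightEmbedding_apply]
      congr 1
      omega
    have split_top : ∑ i ∈ Finset.Icc 1 (2 * k + 1), t (n - i)
        = ∑ i ∈ Finset.Icc 1 (2 * k), t (n - i) + t (n - (2 * k + 1)) := by
      rw [Finset.sum_Icc_succ_top (by omega : 1 ≤ 2 * k + 1)]
    have split_bot : ∑ i ∈ Finset.Icc 1 (2 * k + 1), t (n - i)
        = t (n - 1) + ∑ i ∈ Finset.Icc 2 (2 * k + 1), t (n - i) := by
      have h1' : Finset.Icc 1 (2 * k + 1) = insert 1 (Finset.Ioc 1 (2 * k + 1)) :=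
        (Finset.Ioc_insert_left (by omega)).symm
      have h2' : Finset.Ioc 1 (2 * k + 1) = Finset.Icc 2 (2 * k + 1) := by
        rw [← Finset.Icc_add_one_left_eq_Ioc]; rfl
      rw [h1', Finset.sum_insert (by simp), h2']
    have : t n + t (n - q) = t (n - 1) + t (n - 1) := by
      rw [e1, hq]
      rw [← split_top, split_bot, ← e2]
    omega
  -- value of t (2k)
  have t2k : t (2 * k) = 2 * k - 1 := by
    rw [hrec (2 * k) le_rfl]
    have : 2 * k = (2 * k - 1) + 1 := by omega
    rw [this, Finset.sum_Icc_succ_top (by omega : 1 ≤ 2 * k - 1 + 1)]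
    have : ∑ i ∈ Finset.Icc 1 (2 * k - 1), t (2 * k - 1 + 1 - i)
        = ∑ i ∈ Finset.Icc 1 (2 * k - 1), 1 := by
      apply Finset.sum_congr rfl
      intro i hi
      simp only [Finset.mem_Icc] at hi
      exact h1 _ (by omega) (by omega)
    rw [this]
    have h00 : t (2 * k - 1 + 1 - (2 * k - 1 + 1)) = 0 := by
      simpa using h0
    rw [h00]
    simp [Nat.card_Icc]
  -- parity
  have parity : ∀ m, (t m % 2 = 0 ↔ m % q = 0) := by
    intro m
    induction m using Nat.strong_induction_on with
    | _ m ih =>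
      rcases Nat.lt_or_ge m q with hm | hm
      · rcases Nat.eq_zero_or_pos m with rfl | hpos
        · simp [h0]
        · rcases Nat.lt_or_ge m (2 * k) with hm2 | hm2
          · rw [h1 m hpos (by omega)]
            have hmq : m % q = m := Nat.mod_eq_of_lt (by omega)
            constructor <;> intro h <;> omega
          · have : m = 2 * k := by omega
            subst this
            rw [t2k]
            have hmq : (2 * k) % q = 2 * k := Nat.mod_eq_of_lt (by omega)
            constructor <;> intro h <;> omega
      · have h' := tele m hm
        have ih' := ih (m - q) (by omega)
        have hmod : (m - q) % q = m % q := by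
          conv_rhs => rw [show m = (m - q) + q by omega]
          rw [Nat.add_mod_right]
        omega
  -- helper: (t ((j+1)*q) + t (j*q)) % 4 = 2
  have helper : ∀ j : ℕ, (t ((j + 1) * q) + t (j * q)) % 4 = 2 := by
    intro j
    have hn : q ≤ (j + 1) * q := by nlinarith
    have h' := tele ((j + 1) * q) hn
    have hsub : (j + 1) * q - q = j * q := by
      rw [add_mul, one_mul, Nat.add_sub_cancel]
    rw [hsub] at h'
    have hidx : (j + 1) * q - 1 = j * q + (q - 1) := by
      have : (j + 1) * q = j * q + q := by ring
      omega
    have hmod : ((j + 1) * q - 1) % q = q - 1 := by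
      rw [hidx, add_comm, Nat.add_mul_mod_self_right, Nat.mod_eq_of_lt (by omega)]
    have hodd : t ((j + 1) * q - 1) % 2 = 1 := by
      have := parity ((j + 1) * q - 1)
      omega
    omega
  -- main mod-4 claim
  have main : ∀ j : ℕ, (j % 2 = 0 → t (j * q) % 4 = 0) ∧ (j % 2 = 1 → t (j * q) % 4 = 2) := by
    intro j
    induction j with
    | zero => simp [h0]
    | succ j ih =>
      have h' := helper j
      constructor <;> intro hp
      · have : j % 2 = 1 := by omega
        have := ih.2 this
        omega
      · have : j % 2 = 0 := by omega
        have := ih.1 this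
        omega
  intro n hn
  set j := 2 * (n / (2 * q)) + 1 with hj
  have hjq : n = j * q := by
    have := Nat.div_add_mod n (2 * q)
    have hq5 : 5 ≤ q := by omega
    nlinarith [Nat.div_add_mod n (2 * q)]
  have h4 : t n % 4 = 2 := by
    rw [hjq]
    exact (main j).2 (by omega)
  have hm : t n = 2 * (2 * (t n / 4) + 1) := by omega
  rw [hm, padicValNat.mul (by norm_num) (by omega)]
  rw [padicValNat.self (by norm_num)]
  rw [padicValNat.eq_zero_of_not_dvd (by omega)]
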